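/- Let R : (0,1) → (0,∞) be differentiable such that p R'(p)/R(p) is decreasing and nonnegative on (0,1). Then for every natural number m ≥ 1, the function p ↦ R(p)/R(1-(1-p)^{m+1}) is increasing on (0,1). -/

import Mathlib

open Set

lemma gmem {p : ℝ} (hp : p ∈ Set.Ioo (0:ℝ) 1) (m : ℕ) :
    (1 - (1 - p) ^ (m + 1)) ∈ Set.Ioo (0:ℝ) 1 := by
  obtain ⟨h0, h1⟩ := hp
  have hq0 : 0 < 1 - p := by linarith
  have hq1 : 1 - p < 1 := by linarith
  constructor
  · have : (1 - p) ^ (m + 1) < 1 := pow_lt_one₀ hq0.le hq1 (Nat.succ_ne_zero m)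
    linarith
  · have : 0 < (1 - p) ^ (m + 1) := pow_pos hq0 _
    linarith

lemma key_ineq {p : ℝ} (hp : p ∈ Set.Ioo (0:ℝ) 1) (m : ℕ) :
    (m + 1 : ℝ) * p * (1 - p) ^ m ≤ 1 - (1 - p) ^ (m + 1) := by
  obtain ⟨h0, h1⟩ := hp
  set q := 1 - p with hq
  have hq0 : 0 < q := by simp [hq]; linarith
  have hq1 : q < 1 := by simp [hq]; linarith
  have hgeom : (1 - q) * ∑ i ∈ Finset.range (m + 1), q ^ i = 1 - q ^ (m + 1) := by
    have := geom_sum_mul q (m + 1)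
    nlinarith [this]
  have hsum : (m + 1 : ℝ) * q ^ m ≤ ∑ i ∈ Finset.range (m + 1), q ^ i := by
    have : ∀ i ∈ Finset.range (m + 1), q ^ m ≤ q ^ i := by
      intro i hi
      exact pow_le_pow_of_le_one hq0.le hq1.le (Nat.lt_succ_iff.mp (Finset.mem_range.mp hi))
    calc (m + 1 : ℝ) * q ^ m = ∑ _i ∈ Finset.range (m + 1), q ^ m := by
          simp [Finset.sum_const, mul_comm]
      _ ≤ ∑ i ∈ Finset.range (m + 1), q ^ i := Finset.sum_le_sum this
  have hp' : p = 1 - q := by simp [hq]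
  have h := mul_le_mul_of_nonneg_left hsum (by linarith : (0:ℝ) ≤ 1 - q)
  rw [hgeom] at h
  rw [hp']
  nlinarith [h]

lemma p_le_g {p : ℝ} (hp : p ∈ Set.Ioo (0:ℝ) 1) (m : ℕ) :
    p ≤ 1 - (1 - p) ^ (m + 1) := by
  obtain ⟨h0, h1⟩ := hp
  have : (1 - p) ^ (m + 1) ≤ (1 - p) ^ 1 :=
    pow_le_pow_of_le_one (by linarith) (by linarith) (Nat.one_le_iff_ne_zero.mpr (Nat.succ_ne_zero m))
  simp at this
  linarith

theorem redundancy_component_vs_system (R R' : ℝ → ℝ)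
    (hRpos : ∀ p ∈ Set.Ioo (0 : ℝ) 1, 0 < R p)
    (hRd : ∀ p ∈ Set.Ioo (0 : ℝ) 1, HasDerivAt R (R' p) p)
    (hdec : AntitoneOn (fun p => p * R' p / R p) (Set.Ioo (0 : ℝ) 1))
    (hnonneg : ∀ p ∈ Set.Ioo (0 : ℝ) 1, 0 ≤ p * R' p / R p)
    (m : ℕ) (hm : 1 ≤ m) :
    MonotoneOn (fun p => R p / R (1 - (1 - p) ^ (m + 1))) (Set.Ioo (0 : ℝ) 1) := by
  set F : ℝ → ℝ := fun p => R p / R (1 - (1 - p) ^ (m + 1)) with hF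
  -- derivative of F at each point of Ioo
  have hderiv : ∀ p ∈ Set.Ioo (0:ℝ) 1, HasDerivAt F
      ((R' p * R (1 - (1 - p) ^ (m + 1)) -
        R p * (R' (1 - (1 - p) ^ (m + 1)) * ((m + 1) * (1 - p) ^ m))) /
        (R (1 - (1 - p) ^ (m + 1))) ^ 2) p := by
    intro p hp
    have hgp := gmem hp m
    have hg : HasDerivAt (fun x : ℝ => 1 - (1 - x) ^ (m + 1)) ((m + 1) * (1 - p) ^ m) p := by
      have h1 : HasDerivAt (fun x : ℝ => 1 - x) (-1) p := (hasDerivAt_id p).const_sub 1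
      have h2 : HasDerivAt (fun x : ℝ => (1 - x) ^ (m + 1)) (↑(m + 1) * (1 - p) ^ (m + 1 - 1) * -1) p := h1.pow (m + 1)
      have h3 := h2.const_sub 1
      refine h3.congr_deriv ?_
      push_cast
      ring_nf
    have hcomp : HasDerivAt (fun x : ℝ => R (1 - (1 - x) ^ (m + 1)))
        (R' (1 - (1 - p) ^ (m + 1)) * ((m + 1) * (1 - p) ^ m)) p :=
      (hRd _ hgp).comp p hg
    exact (hRd p hp).div hcomp (ne_of_gt (hRpos _ hgp))
  have hcont : ContinuousOn F (Set.Ioo (0:ℝ) 1) := fun p hp =>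
    ((hderiv p hp).differentiableAt.continuousAt).continuousWithinAt
  apply monotoneOn_of_deriv_nonneg (convex_Ioo 0 1) hcont
  · intro p hp
    rw [interior_Ioo] at hp
    exact ((hderiv p hp).differentiableAt).differentiableWithinAt
  · intro p hp
    rw [interior_Ioo] at hp
    rw [(hderiv p hp).deriv]
    set g := 1 - (1 - p) ^ (m + 1) with hgdef
    have hgp := gmem hp m
    have hRp := hRpos p hp
    have hRg := hRpos g hgp
    have hp0 : 0 < p := hp.1
    have hg0 : 0 < g := hgp.1
    -- R' g ≥ 0
    have hR'g : 0 ≤ R' g := by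
      have h := hnonneg g hgp
      have h2 : 0 ≤ g * R' g := by
        have := mul_nonneg h hRg.le
        rwa [div_mul_cancel₀ _ (ne_of_gt hRg)] at this
      nlinarith
    -- cross inequality from antitonicity
    have hcross : g * R' g * R p ≤ p * R' p * R g := by
      have h := hdec hp hgp (p_le_g hp m)
      simp only at h
      rw [div_le_div_iff₀ hRg hRp] at h
      rw [← hgdef] at h
      linarith
    have hkey : (m + 1 : ℝ) * p * (1 - p) ^ m ≤ g := key_ineq hp m
    apply div_nonneg _ (sq_nonneg _)
    have h1 : p * (R p * (R' g * ((m + 1) * (1 - p) ^ m))) ≤ R p * R' g * g := by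
      have := mul_le_mul_of_nonneg_left hkey (mul_nonneg hRp.le hR'g)
      nlinarith [this]
    nlinarith [h1, hcross, mul_pos hRp hRg]
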